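/- Let 0 < r < s < 1 and let Y be a random variable with Y > 0 almost surely such that 𝔼[Y^s] < ∞ and such that log Y has finite second moment under each tilted measure 𝔼_q (q ∈ [0,s]). Then 𝔼[Y^r] = 𝔼[Y^s]^{r/s} · exp( − ∫₀^s f_{r,s}(q) · Var_q[log Y] dq ), where f_{r,s}(q) := (1/s) · min(r,q) · (s − max(r,q)) for q ∈ (0,s). -/

import Mathlib

open MeasureTheory

noncomputable section

/-- Expectation of `Z` under the `q`-tilted measure with tilt variable `X`:
`𝔼_q[Z] = 𝔼[Z e^{qX}] / 𝔼[e^{qX}]`. -/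
def tiltExp {α : Type*} [MeasurableSpace α] (μ : Measure α) (X : α → ℝ) (q : ℝ)
    (Z : α → ℝ) : ℝ :=
  (∫ ω, Z ω * Real.exp (q * X ω) ∂μ) / (∫ ω, Real.exp (q * X ω) ∂μ)

/-- Variance of `X` under the `q`-tilted measure: `Var_q[X] = 𝔼_q[(X - 𝔼_q[X])²]`. -/
def tiltVar {α : Type*} [MeasurableSpace α] (μ : Measure α) (X : α → ℝ) (q : ℝ) : ℝ :=
  tiltExp μ X q (fun ω => (X ω - tiltExp μ X q X) ^ 2)

theorem fractional_moment_log_variance_identity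
    {α : Type*} [MeasurableSpace α] (μ : Measure α) [IsProbabilityMeasure μ]
    (Y : α → ℝ) (hY : AEMeasurable Y μ) (r s : ℝ) (hr : 0 < r) (hrs : r < s) (hs : s < 1)
    (hpos : ∀ᵐ ω ∂μ, 0 < Y ω)
    (hYs : Integrable (fun ω => Y ω ^ s) μ)
    (hmom : ∀ q ∈ Set.Icc (0:ℝ) s,
      Integrable (fun ω => (Real.log (Y ω)) ^ 2 * Real.exp (q * Real.log (Y ω))) μ) :
    (∫ ω, Y ω ^ r ∂μ) =
      (∫ ω, Y ω ^ s ∂μ) ^ (r / s) *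
        Real.exp (-∫ q in (0:ℝ)..s,
          (1 / s) * min r q * (s - max r q) *
            tiltVar μ (fun ω => Real.log (Y ω)) q) := by
  have hs0 : (0:ℝ) < s := hr.trans hrs
  set X : α → ℝ := fun ω => Real.log (Y ω) with hXdef
  have hXm : AEMeasurable X μ := Real.measurable_log.comp_aemeasurable hY
  have hmom' : ∀ q ∈ Set.Icc (0:ℝ) s,
      Integrable (fun ω => X ω ^ 2 * Real.exp (q * X ω)) μ := fun q hq => by
    simpa only [hXdef] using hmom q hq
  have em : ∀ q : ℝ, AEMeasurable (fun ω => Real.exp (q * X ω)) μ := fun q =>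
    Real.measurable_exp.comp_aemeasurable (hXm.const_mul q)
  -- pointwise exponential bound
  have expb : ∀ q ∈ Set.Icc (0:ℝ) s, ∀ x : ℝ, Real.exp (q * x) ≤ 1 + Real.exp (s * x) := by
    intro q hq x
    rcases le_or_gt 0 x with hx | hx
    · have h1 : q * x ≤ s * x := mul_le_mul_of_nonneg_right hq.2 hx
      have := Real.exp_le_exp.2 h1
      linarith
    · have h1 : q * x ≤ 0 := mul_nonpos_of_nonneg_of_nonpos hq.1 hx.le
      have := Real.exp_le_one_iff.2 h1
      have := Real.exp_pos (s * x)
      linarith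
  have hEs : Integrable (fun ω => Real.exp (s * X ω)) μ := by
    refine hYs.congr (hpos.mono fun ω h => ?_)
    show Y ω ^ s = Real.exp (s * Real.log (Y ω))
    rw [Real.rpow_def_of_pos h, mul_comm]
  have hX2 : Integrable (fun ω => X ω ^ 2) μ := by
    refine (hmom' 0 ⟨le_refl 0, hs0.le⟩).congr ?_
    filter_upwards with ω; simp
  -- the global dominating bound
  set B : α → ℝ := fun ω => (1 + X ω ^ 2) * (1 + Real.exp (s * X ω)) with hBdef
  have hB : Integrable B μ := by
    have h := (((integrable_const (1:ℝ)).add hX2).add hEs).add (hmom' s ⟨hs0.le, le_refl s⟩)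
    refine h.congr (Filter.Eventually.of_forall fun ω => ?_)
    simp only [hBdef, Pi.add_apply]; ring
  have hBnn : ∀ ω, 0 ≤ B ω := fun ω => by
    have := Real.exp_pos (s * X ω); have := sq_nonneg (X ω); positivity
  have hBb : ∀ q ∈ Set.Icc (0:ℝ) s, ∀ x : ℝ,
      |x * Real.exp (q * x)| ≤ (1 + x ^ 2) * (1 + Real.exp (s * x)) := by
    intro q hq x
    have h1 : |x| ≤ 1 + x ^ 2 := by nlinarith [sq_abs x, sq_nonneg (|x| - 1), abs_nonneg x]
    have h2 := expb q hq x
    have h3 := (Real.exp_pos (q * x)).le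
    rw [abs_mul, abs_of_nonneg h3]
    exact mul_le_mul h1 h2 h3 (by nlinarith [sq_nonneg x])
  have hB2b : ∀ q ∈ Set.Icc (0:ℝ) s, ∀ x : ℝ,
      |x ^ 2 * Real.exp (q * x)| ≤ (1 + x ^ 2) * (1 + Real.exp (s * x)) := by
    intro q hq x
    have h2 := expb q hq x
    have h3 := (Real.exp_pos (q * x)).le
    rw [abs_mul, abs_of_nonneg (sq_nonneg x), abs_of_nonneg h3]
    exact mul_le_mul (by nlinarith [sq_nonneg x]) h2 h3 (by nlinarith [sq_nonneg x])
  -- integrability of e^{qX} and X e^{qX}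
  have hE : ∀ q ∈ Set.Icc (0:ℝ) s, Integrable (fun ω => Real.exp (q * X ω)) μ := by
    intro q hq
    refine ((integrable_const (1:ℝ)).add hEs).mono (em q).aestronglyMeasurable
      (Filter.Eventually.of_forall fun ω => ?_)
    have h1 := expb q hq (X ω)
    have h2 := (Real.exp_pos (q * X ω)).le
    have h3 := (Real.exp_pos (s * X ω)).le
    simp only [Real.norm_eq_abs, abs_of_nonneg h2]
    calc Real.exp (q * X ω) ≤ 1 + Real.exp (s * X ω) := h1
      _ ≤ |1 + Real.exp (s * X ω)| := le_abs_self _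
  have hXE : ∀ q ∈ Set.Icc (0:ℝ) s, Integrable (fun ω => X ω * Real.exp (q * X ω)) μ := by
    intro q hq
    refine hB.mono (hXm.mul (em q)).aestronglyMeasurable
      (Filter.Eventually.of_forall fun ω => ?_)
    simp only [Real.norm_eq_abs]
    calc |X ω * Real.exp (q * X ω)| ≤ B ω := hBb q hq (X ω)
      _ ≤ |B ω| := le_abs_self _
  -- the three moment functions
  set G : ℝ → ℝ := fun q => ∫ ω, Real.exp (q * X ω) ∂μ with hGdef
  set G1 : ℝ → ℝ := fun q => ∫ ω, X ω * Real.exp (q * X ω) ∂μ with hG1def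
  set G2 : ℝ → ℝ := fun q => ∫ ω, X ω ^ 2 * Real.exp (q * X ω) ∂μ with hG2def
  have hGpos : ∀ q ∈ Set.Icc (0:ℝ) s, 0 < G q := fun q hq =>
    ProbabilityTheory.mgf_pos (hE q hq)
  have hG0 : G 0 = 1 := by simp [hGdef]
  -- continuity of G, G1, G2 on [0,s]
  have hGc : ContinuousOn G (Set.Icc 0 s) := by
    intro q₀ hq₀
    refine tendsto_integral_filter_of_dominated_convergence
      (fun ω => 1 + Real.exp (s * X ω))
      (Filter.Eventually.of_forall fun q => (em q).aestronglyMeasurable) ?_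
      ((integrable_const (1:ℝ)).add hEs) ?_
    · filter_upwards [self_mem_nhdsWithin] with q hq
      filter_upwards with ω
      simpa only [Real.norm_eq_abs, abs_of_nonneg (Real.exp_pos _).le] using expb q hq (X ω)
    · filter_upwards with ω
      exact ((Real.continuous_exp.comp (continuous_mul_right (X ω))).tendsto q₀).mono_left
        nhdsWithin_le_nhds
  have hG1c : ContinuousOn G1 (Set.Icc 0 s) := by
    intro q₀ hq₀
    refine tendsto_integral_filter_of_dominated_convergence B
      (Filter.Eventually.of_forall fun q => (hXm.mul (em q)).aestronglyMeasurable) ?_ hB ?_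
    · filter_upwards [self_mem_nhdsWithin] with q hq
      filter_upwards with ω
      simpa only [Real.norm_eq_abs] using hBb q hq (X ω)
    · filter_upwards with ω
      exact ((continuous_const.mul (Real.continuous_exp.comp
        (continuous_mul_right (X ω)))).tendsto q₀).mono_left nhdsWithin_le_nhds
  have hG2c : ContinuousOn G2 (Set.Icc 0 s) := by
    intro q₀ hq₀
    refine tendsto_integral_filter_of_dominated_convergence B
      (Filter.Eventually.of_forall fun q =>
        ((hXm.mul hXm).mul (em q)).aestronglyMeasurable.congr
          (Filter.Eventually.of_forall fun ω => by simp only [Pi.mul_apply]; ring)) ?_ hB ?_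
    · filter_upwards [self_mem_nhdsWithin] with q hq
      filter_upwards with ω
      simpa only [Real.norm_eq_abs] using hB2b q hq (X ω)
    · filter_upwards with ω
      exact ((continuous_const.mul (Real.continuous_exp.comp
        (continuous_mul_right (X ω)))).tendsto q₀).mono_left nhdsWithin_le_nhds
  -- derivatives of G and G1 on (0,s)
  have ballsub : ∀ q₀ ∈ Set.Ioo (0:ℝ) s, Metric.ball q₀ (min q₀ (s - q₀)) ⊆ Set.Icc 0 s := by
    intro q₀ hq₀ x hx
    rw [Metric.mem_ball, Real.dist_eq, abs_sub_lt_iff] at hx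
    constructor
    · have := hx.2; have : q₀ - x < min q₀ (s - q₀) := this
      have := min_le_left q₀ (s - q₀); linarith
    · have := hx.1; have := min_le_right q₀ (s - q₀); linarith
  have hGd : ∀ q₀ ∈ Set.Ioo (0:ℝ) s, HasDerivAt G (G1 q₀) q₀ := by
    intro q₀ hq₀
    have εpos : 0 < min q₀ (s - q₀) := lt_min hq₀.1 (by linarith [hq₀.2])
    have hq₀' : q₀ ∈ Set.Icc (0:ℝ) s := ⟨hq₀.1.le, hq₀.2.le⟩
    exact (hasDerivAt_integral_of_dominated_loc_of_deriv_le
      (F' := fun q ω => X ω * Real.exp (q * X ω)) (Metric.ball_mem_nhds q₀ εpos)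
      (Filter.Eventually.of_forall fun q => (em q).aestronglyMeasurable)
      (hE q₀ hq₀') (hXm.mul (em q₀)).aestronglyMeasurable
      (Filter.Eventually.of_forall fun ω q hq => by
        simpa only [Real.norm_eq_abs] using hBb q (ballsub q₀ hq₀ hq) (X ω))
      hB
      (Filter.Eventually.of_forall fun ω q hq => by
        simpa [mul_comm] using ((hasDerivAt_mul_const (X ω)).exp (x := q)))).2
  have hG1d : ∀ q₀ ∈ Set.Ioo (0:ℝ) s, HasDerivAt G1 (G2 q₀) q₀ := by
    intro q₀ hq₀
    have εpos : 0 < min q₀ (s - q₀) := lt_min hq₀.1 (by linarith [hq₀.2])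
    have hq₀' : q₀ ∈ Set.Icc (0:ℝ) s := ⟨hq₀.1.le, hq₀.2.le⟩
    exact (hasDerivAt_integral_of_dominated_loc_of_deriv_le
      (F' := fun q ω => X ω ^ 2 * Real.exp (q * X ω)) (Metric.ball_mem_nhds q₀ εpos)
      (Filter.Eventually.of_forall fun q => (hXm.mul (em q)).aestronglyMeasurable)
      (hXE q₀ hq₀')
      (((hXm.mul hXm).mul (em q₀)).aestronglyMeasurable.congr
        (Filter.Eventually.of_forall fun ω => by simp only [Pi.mul_apply]; ring))
      (Filter.Eventually.of_forall fun ω q hq => by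
        simpa only [Real.norm_eq_abs] using hB2b q (ballsub q₀ hq₀ hq) (X ω))
      hB
      (Filter.Eventually.of_forall fun ω q hq => by
        have h := (((hasDerivAt_mul_const (X ω)).exp (x := q)).const_mul (X ω))
        convert h using 1
        · rfl
        · rfl
        ring)).2
  -- log-moment generating function and its derivatives
  set Λ : ℝ → ℝ := fun q => Real.log (G q) with hΛdef
  set L : ℝ → ℝ := fun q => G1 q / G q with hLdef
  set V : ℝ → ℝ := fun q => (G2 q * G q - G1 q * G1 q) / G q ^ 2 with hVdef
  have hΛd : ∀ q ∈ Set.Ioo (0:ℝ) s, HasDerivAt Λ (L q) q := fun q hq =>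
    (hGd q hq).log (hGpos q ⟨hq.1.le, hq.2.le⟩).ne'
  have hLd : ∀ q ∈ Set.Ioo (0:ℝ) s, HasDerivAt L (V q) q := fun q hq =>
    (hG1d q hq).div (hGd q hq) (hGpos q ⟨hq.1.le, hq.2.le⟩).ne'
  have hΛc : ContinuousOn Λ (Set.Icc 0 s) :=
    hGc.log fun q hq => (hGpos q hq).ne'
  have hLc : ContinuousOn L (Set.Icc 0 s) :=
    hG1c.div hGc fun q hq => (hGpos q hq).ne'
  have hVc : ContinuousOn V (Set.Icc 0 s) := by
    refine ((hG2c.mul hGc).sub (hG1c.mul hG1c)).div (hGc.pow 2) fun q hq => ?_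
    exact pow_ne_zero 2 (hGpos q hq).ne'
  -- tilted variance equals V
  have hTV : ∀ q ∈ Set.Icc (0:ℝ) s, tiltVar μ X q = V q := by
    intro q hq
    have hGne := (hGpos q hq).ne'
    have hm : tiltExp μ X q X = L q := rfl
    set m := L q with hmdef
    have key : (∫ ω, (X ω - m) ^ 2 * Real.exp (q * X ω) ∂μ)
        = G2 q - 2 * m * G1 q + m ^ 2 * G q := by
      have h1 := hmom' q hq
      have h2 : Integrable (fun ω => 2 * m * (X ω * Real.exp (q * X ω))) μ :=
        (hXE q hq).const_mul (2 * m)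
      have h12 : Integrable (fun ω => X ω ^ 2 * Real.exp (q * X ω)
          - 2 * m * (X ω * Real.exp (q * X ω))) μ := h1.sub h2
      have h3 : Integrable (fun ω => m ^ 2 * Real.exp (q * X ω)) μ :=
        (hE q hq).const_mul (m ^ 2)
      calc (∫ ω, (X ω - m) ^ 2 * Real.exp (q * X ω) ∂μ)
          = ∫ ω, (X ω ^ 2 * Real.exp (q * X ω)
              - 2 * m * (X ω * Real.exp (q * X ω)))
              + m ^ 2 * Real.exp (q * X ω) ∂μ := by
            congr 1; funext ω; ring
        _ = (∫ ω, X ω ^ 2 * Real.exp (q * X ω)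
              - 2 * m * (X ω * Real.exp (q * X ω)) ∂μ)
              + ∫ ω, m ^ 2 * Real.exp (q * X ω) ∂μ := integral_add h12 h3
        _ = ((∫ ω, X ω ^ 2 * Real.exp (q * X ω) ∂μ)
              - ∫ ω, 2 * m * (X ω * Real.exp (q * X ω)) ∂μ)
              + ∫ ω, m ^ 2 * Real.exp (q * X ω) ∂μ := by
            rw [integral_sub h1 h2]
        _ = G2 q - 2 * m * G1 q + m ^ 2 * G q := by
            rw [integral_const_mul, integral_const_mul]
    show (∫ ω, (X ω - m) ^ 2 * Real.exp (q * X ω) ∂μ) / G q = V q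
    rw [key, hVdef, hmdef, hLdef]
    field_simp
    ring
  -- the interval integral
  set φ : ℝ → ℝ := fun q => (1 / s) * min r q * (s - max r q) * V q with hφdef
  have hφc : ContinuousOn φ (Set.Icc 0 s) := by
    refine ContinuousOn.mul ?_ hVc
    exact (((continuous_const.mul (continuous_const.min continuous_id)).mul
      (continuous_const.sub (continuous_const.max continuous_id)))).continuousOn
  have hI : (∫ q in (0:ℝ)..s, (1 / s) * min r q * (s - max r q) * tiltVar μ X q)
      = ∫ q in (0:ℝ)..s, φ q := by
    refine intervalIntegral.integral_congr fun q hq => ?_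
    rw [Set.uIcc_of_le hs0.le] at hq
    rw [hφdef]; simp only []
    rw [hTV q hq]
  -- first piece via FTC
  set F : ℝ → ℝ := fun q => ((s - r) / s) * (q * L q - Λ q) with hFdef
  have hIcc1 : Set.Icc (0:ℝ) r ⊆ Set.Icc 0 s := Set.Icc_subset_Icc le_rfl hrs.le
  have hIcc2 : Set.Icc r s ⊆ Set.Icc 0 s := Set.Icc_subset_Icc hr.le le_rfl
  have hFTC1 : (∫ q in (0:ℝ)..r, φ q) = F r - F 0 := by
    refine intervalIntegral.integral_eq_sub_of_hasDerivAt_of_le hr.le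
      (continuousOn_const.mul ((continuousOn_id.mul (hLc.mono hIcc1)).sub
        (hΛc.mono hIcc1))) (fun q hq => ?_) ?_
    · have hq' : q ∈ Set.Ioo (0:ℝ) s := ⟨hq.1, hq.2.trans hrs⟩
      have h := (((hasDerivAt_id q).mul (hLd q hq')).sub (hΛd q hq')).const_mul ((s - r) / s)
      have hmin : min r q = q := min_eq_right hq.2.le
      have hmax : max r q = r := max_eq_left hq.2.le
      convert h using 1
      · rfl
      · rfl
      rw [hφdef]; simp only [hmin, hmax]
      field_simp
      simp only [id_eq]; ring
    · exact (hφc.mono hIcc1).intervalIntegrable_of_Icc hr.le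
  set K : ℝ → ℝ := fun q => (r / s) * (Λ q + (s - q) * L q) with hKdef
  have hFTC2 : (∫ q in r..s, φ q) = K s - K r := by
    refine intervalIntegral.integral_eq_sub_of_hasDerivAt_of_le hrs.le
      (continuousOn_const.mul ((hΛc.mono hIcc2).add
        ((continuous_const.sub continuous_id).continuousOn.mul (hLc.mono hIcc2))))
      (fun q hq => ?_) ?_
    · have hq' : q ∈ Set.Ioo (0:ℝ) s := ⟨hr.trans hq.1, hq.2⟩
      have h := ((hΛd q hq').add
        (((hasDerivAt_id q).const_sub s).mul (hLd q hq'))).const_mul (r / s)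
      have hmin : min r q = r := min_eq_left hq.1.le
      have hmax : max r q = q := max_eq_right hq.1.le
      convert h using 1
      · rfl
      · rfl
      rw [hφdef]; simp only [hmin, hmax]
      field_simp
      simp only [id_eq]; ring
    · exact (hφc.mono hIcc2).intervalIntegrable_of_Icc hrs.le
  have hsplit : (∫ q in (0:ℝ)..s, φ q) = (∫ q in (0:ℝ)..r, φ q) + ∫ q in r..s, φ q := by
    rw [intervalIntegral.integral_add_adjacent_intervals
      ((hφc.mono hIcc1).intervalIntegrable_of_Icc hr.le)
      ((hφc.mono hIcc2).intervalIntegrable_of_Icc hrs.le)]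
  have hΛ0 : Λ 0 = 0 := by rw [hΛdef]; simp only []; rw [hG0, Real.log_one]
  have hIval : (∫ q in (0:ℝ)..s, φ q) = (r / s) * Λ s - Λ r := by
    rw [hsplit, hFTC1, hFTC2, hFdef, hKdef]
    simp only [hΛ0]
    field_simp
    ring
  -- final assembly
  have hYr : (∫ ω, Y ω ^ r ∂μ) = G r :=
    integral_congr_ae (hpos.mono fun ω h => by
      show Y ω ^ r = Real.exp (r * Real.log (Y ω))
      rw [Real.rpow_def_of_pos h, mul_comm])
  have hYsG : (∫ ω, Y ω ^ s ∂μ) = G s :=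
    integral_congr_ae (hpos.mono fun ω h => by
      show Y ω ^ s = Real.exp (s * Real.log (Y ω))
      rw [Real.rpow_def_of_pos h, mul_comm])
  have hGspos := hGpos s ⟨hs0.le, le_refl s⟩
  have hGrpos := hGpos r ⟨hr.le, hrs.le⟩
  rw [hYr, hYsG, hI, hIval, Real.rpow_def_of_pos hGspos, ← Real.exp_add]
  have : Real.log (G s) * (r / s) + -((r / s) * Λ s - Λ r) = Λ r := by
    rw [hΛdef]; ring
  rw [this, hΛdef]
  exact (Real.exp_log hGrpos).symm
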